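/- Let H and K be complex Hilbert spaces, let A be a densely defined closed operator on H with core C_A, and let B be a densely defined closed operator on K with core C_B. Then the algebraic span of elementary tensors ξ ⊗ η with ξ ∈ C_A and η ∈ C_B is a core for the closure of the tensor product operator A ⊗ B on H ⊗ K (i.e., the set is dense in the domain of the closure of A ⊗ B for the graph norm). -/

import Mathlib

/- STATEMENT 2: if C_A is a core for the densely defined closed operator A on H
and C_B is a core for the densely defined closed operator B on K, then the span
of elementary tensors ξ ⊗ η with ξ ∈ C_A, η ∈ C_B is a core for the closure
`C` of the tensor product operator A ⊗ B on the Hilbert space tensor product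
H ⊗ K.  The Hilbert tensor product is axiomatized by its characteristic
inner-product identity and density of elementary tensors; `C` being the closure
of A ⊗ B is expressed by: C is closed, elementary tensors of the domains lie in
Dom C with C(ξ ⊗ η) = Aξ ⊗ Bη, and their span is a core for C. -/

noncomputable section

/-- A realization of the Hilbert space tensor product `H ⊗ K`. -/
structure HilbertTensorProduct (H K T : Type*)
    [NormedAddCommGroup H] [InnerProductSpace ℂ H]
    [NormedAddCommGroup K] [InnerProductSpace ℂ K]
    [NormedAddCommGroup T] [InnerProductSpace ℂ T] where
  tmul : H → K → T
  add_left : ∀ ξ ξ' η, tmul (ξ + ξ') η = tmul ξ η + tmul ξ' η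
  smul_left : ∀ (c : ℂ) ξ η, tmul (c • ξ) η = c • tmul ξ η
  add_right : ∀ ξ η η', tmul ξ (η + η') = tmul ξ η + tmul ξ η'
  smul_right : ∀ (c : ℂ) ξ η, tmul ξ (c • η) = c • tmul ξ η
  inner_tmul : ∀ ξ η ξ' η',
    (inner ℂ (tmul ξ η) (tmul ξ' η') : ℂ) = inner ℂ ξ ξ' * inner ℂ η η'
  dense_span :
    Dense (↑(Submodule.span ℂ {x : T | ∃ ξ η, x = tmul ξ η}) : Set T)

/-- `S` is a core for the closed operator `C`: `S ⊆ Dom C` and `S` is dense in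
`Dom C` for the graph norm `‖x‖ + ‖Cx‖`. -/
def IsCore {E : Type*} [NormedAddCommGroup E] [InnerProductSpace ℂ E]
    (C : E →ₗ.[ℂ] E) (S : Set E) : Prop :=
  S ⊆ C.domain ∧
    ∀ x : C.domain, ∀ ε > 0, ∃ y : C.domain,
      (y : E) ∈ S ∧ ‖(x : E) - (y : E)‖ + ‖C x - C y‖ < ε

section Aux

variable {H K T : Type*}
    [NormedAddCommGroup H] [InnerProductSpace ℂ H]
    [NormedAddCommGroup K] [InnerProductSpace ℂ K]
    [NormedAddCommGroup T] [InnerProductSpace ℂ T]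
    (P : HilbertTensorProduct H K T)

lemma HilbertTensorProduct.sub_left (ξ ξ' : H) (η : K) :
    P.tmul (ξ - ξ') η = P.tmul ξ η - P.tmul ξ' η := by
  have h := P.add_left (ξ - ξ') ξ' η
  rw [sub_add_cancel] at h
  rw [eq_sub_iff_add_eq, ← h]

lemma HilbertTensorProduct.sub_right (ξ : H) (η η' : K) :
    P.tmul ξ (η - η') = P.tmul ξ η - P.tmul ξ η' := by
  have h := P.add_right ξ (η - η') η'
  rw [sub_add_cancel] at h
  rw [eq_sub_iff_add_eq, ← h]

lemma HilbertTensorProduct.norm_tmul (ξ : H) (η : K) :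
    ‖P.tmul ξ η‖ = ‖ξ‖ * ‖η‖ := by
  have h := P.inner_tmul ξ η ξ η
  rw [inner_self_eq_norm_sq_to_K, inner_self_eq_norm_sq_to_K,
    inner_self_eq_norm_sq_to_K] at h
  have h3 : ‖P.tmul ξ η‖ ^ 2 = (‖ξ‖ * ‖η‖) ^ 2 := by
    rw [mul_pow]; exact_mod_cast h
  exact (sq_eq_sq₀ (norm_nonneg _) (mul_nonneg (norm_nonneg _) (norm_nonneg _))).mp h3

end Aux

theorem tensorProduct_core
    (H K T : Type*)
    [NormedAddCommGroup H] [InnerProductSpace ℂ H] [CompleteSpace H]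
    [NormedAddCommGroup K] [InnerProductSpace ℂ K] [CompleteSpace K]
    [NormedAddCommGroup T] [InnerProductSpace ℂ T] [CompleteSpace T]
    (P : HilbertTensorProduct H K T)
    (A : H →ₗ.[ℂ] H) (B : K →ₗ.[ℂ] K)
    (hA : A.IsClosed) (hAdense : Dense (A.domain : Set H))
    (hB : B.IsClosed) (hBdense : Dense (B.domain : Set K))
    (CA : Set H) (hCA : IsCore A CA)
    (CB : Set K) (hCB : IsCore B CB)
    (C : T →ₗ.[ℂ] T) (hC : C.IsClosed)
    (hdom : ∀ (ξ : A.domain) (η : B.domain), P.tmul ξ η ∈ C.domain)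
    (haction : ∀ (ξ : A.domain) (η : B.domain),
      C ⟨P.tmul ξ η, hdom ξ η⟩ = P.tmul (A ξ) (B η))
    -- `C` is the closure of `A ⊗ B` defined on the span of elementary tensors:
    (hclosure : IsCore C
      ↑(Submodule.span ℂ
        {x : T | ∃ ξ : A.domain, ∃ η : B.domain, x = P.tmul ξ η})) :
    IsCore C
      ↑(Submodule.span ℂ
        {x : T | ∃ ξ ∈ CA, ∃ η ∈ CB, x = P.tmul ξ η}) := by
  set S2 : Set T := {x : T | ∃ ξ ∈ CA, ∃ η ∈ CB, x = P.tmul ξ η} with hS2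
  have hgen : S2 ⊆ (C.domain : Set T) := by
    rintro x ⟨ξ, hξ, η, hη, rfl⟩
    exact hdom ⟨ξ, hCA.1 hξ⟩ ⟨η, hCB.1 hη⟩
  have hD2dom : Submodule.span ℂ S2 ≤ C.domain := Submodule.span_le.mpr hgen
  -- approximation of a single elementary tensor
  have key : ∀ (ξ : A.domain) (η : B.domain), ∀ ε > 0, ∃ w : C.domain,
      (w : T) ∈ Submodule.span ℂ S2 ∧
      ‖P.tmul ξ η - (w : T)‖ + ‖C ⟨P.tmul ξ η, hdom ξ η⟩ - C w‖ < ε := by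
    intro ξ η ε hε
    set M : ℝ := ‖(η : K)‖ + ‖B η‖ + ‖(ξ : H)‖ + ‖A ξ‖ + 3 with hMdef
    have hM3 : (3 : ℝ) ≤ M := by
      have := norm_nonneg (η : K); have := norm_nonneg (B η)
      have := norm_nonneg (ξ : H); have := norm_nonneg (A ξ)
      linarith
    have hMpos : (0 : ℝ) < M := by linarith
    set δ : ℝ := min 1 (ε / (2 * M)) with hδdef
    have hδpos : 0 < δ := lt_min one_pos (by positivity)
    have hδ1 : δ ≤ 1 := min_le_left _ _
    have hδε : 2 * M * δ ≤ ε := by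
      have h := min_le_right 1 (ε / (2 * M))
      calc 2 * M * δ ≤ 2 * M * (ε / (2 * M)) := by
            exact mul_le_mul_of_nonneg_left h (by positivity)
        _ = ε := by field_simp
    obtain ⟨ξ', hξ'CA, hξ'⟩ := hCA.2 ξ δ hδpos
    obtain ⟨η', hη'CB, hη'⟩ := hCB.2 η δ hδpos
    refine ⟨⟨P.tmul ξ' η', hdom ξ' η'⟩, Submodule.subset_span ⟨ξ', hξ'CA, η', hη'CB, rfl⟩, ?_⟩
    have e1 : ‖P.tmul ξ η - P.tmul ξ' η'‖
        ≤ ‖(ξ : H) - (ξ' : H)‖ * ‖(η : K)‖ + ‖(ξ' : H)‖ * ‖(η : K) - (η' : K)‖ := by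
      have hsplit : P.tmul ξ η - P.tmul ξ' η'
          = P.tmul ((ξ : H) - (ξ' : H)) η + P.tmul ξ' ((η : K) - (η' : K)) := by
        rw [P.sub_left, P.sub_right]; abel
      rw [hsplit]
      refine (norm_add_le _ _).trans_eq ?_
      rw [P.norm_tmul, P.norm_tmul]
    have e2 : ‖C ⟨P.tmul ξ η, hdom ξ η⟩ - C ⟨P.tmul ξ' η', hdom ξ' η'⟩‖
        ≤ ‖A ξ - A ξ'‖ * ‖B η‖ + ‖A ξ'‖ * ‖B η - B η'‖ := by
      rw [haction, haction]
      have hsplit : P.tmul (A ξ) (B η) - P.tmul (A ξ') (B η')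
          = P.tmul (A ξ - A ξ') (B η) + P.tmul (A ξ') (B η - B η') := by
        rw [P.sub_left, P.sub_right]; abel
      rw [hsplit]
      refine (norm_add_le _ _).trans_eq ?_
      rw [P.norm_tmul, P.norm_tmul]
    -- basic bounds
    have ha0 : (0 : ℝ) ≤ ‖(ξ : H) - (ξ' : H)‖ := norm_nonneg _
    have hc0 : (0 : ℝ) ≤ ‖A ξ - A ξ'‖ := norm_nonneg _
    have hb0 : (0 : ℝ) ≤ ‖(η : K) - (η' : K)‖ := norm_nonneg _
    have hd0 : (0 : ℝ) ≤ ‖B η - B η'‖ := norm_nonneg _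
    have hnξ' : ‖(ξ' : H)‖ ≤ M := by
      have h1 := abs_norm_sub_norm_le (ξ : H) (ξ' : H)
      have h2 := abs_le.mp h1
      have := norm_nonneg (η : K); have := norm_nonneg (B η); have := norm_nonneg (A ξ)
      linarith [h2.1]
    have hnAξ' : ‖A ξ'‖ ≤ M := by
      have h1 := abs_norm_sub_norm_le (A ξ) (A ξ')
      have h2 := abs_le.mp h1
      have := norm_nonneg (η : K); have := norm_nonneg (B η); have := norm_nonneg (ξ : H)
      linarith [h2.1]
    have hnη : ‖(η : K)‖ ≤ M := by
      have := norm_nonneg (B η); have := norm_nonneg (ξ : H); have := norm_nonneg (A ξ)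
      linarith
    have hnBη : ‖B η‖ ≤ M := by
      have := norm_nonneg (η : K); have := norm_nonneg (ξ : H); have := norm_nonneg (A ξ)
      linarith
    have t1 : ‖(ξ : H) - (ξ' : H)‖ * ‖(η : K)‖ ≤ ‖(ξ : H) - (ξ' : H)‖ * M :=
      mul_le_mul_of_nonneg_left hnη ha0
    have t2 : ‖(ξ' : H)‖ * ‖(η : K) - (η' : K)‖ ≤ M * ‖(η : K) - (η' : K)‖ :=
      mul_le_mul_of_nonneg_right hnξ' hb0
    have t3 : ‖A ξ - A ξ'‖ * ‖B η‖ ≤ ‖A ξ - A ξ'‖ * M :=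
      mul_le_mul_of_nonneg_left hnBη hc0
    have t4 : ‖A ξ'‖ * ‖B η - B η'‖ ≤ M * ‖B η - B η'‖ :=
      mul_le_mul_of_nonneg_right hnAξ' hd0
    have hsum : (‖(ξ : H) - (ξ' : H)‖ + ‖A ξ - A ξ'‖)
        + (‖(η : K) - (η' : K)‖ + ‖B η - B η'‖) < 2 * δ := by linarith
    have hfin : M * ((‖(ξ : H) - (ξ' : H)‖ + ‖A ξ - A ξ'‖)
        + (‖(η : K) - (η' : K)‖ + ‖B η - B η'‖)) < M * (2 * δ) :=
      mul_lt_mul_of_pos_left hsum hMpos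
    have : M * (2 * δ) = 2 * M * δ := by ring
    nlinarith [e1, e2]
  -- he main induction over the span of elementary tensors of the domains
  have main : ∀ v ∈ Submodule.span ℂ
      {x : T | ∃ ξ : A.domain, ∃ η : B.domain, x = P.tmul ξ η},
      ∃ hv : v ∈ C.domain, ∀ ε > 0, ∃ w : C.domain,
        (w : T) ∈ Submodule.span ℂ S2 ∧
        ‖v - (w : T)‖ + ‖C ⟨v, hv⟩ - C w‖ < ε := by
    intro v hv
    induction hv using Submodule.span_induction with
    | mem x hx =>
      obtain ⟨ξ, η, rfl⟩ := hx
      exact ⟨hdom ξ η, fun ε hε => key ξ η ε hε⟩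
    | zero =>
      refine ⟨C.domain.zero_mem, fun ε hε => ⟨0, (Submodule.span ℂ S2).zero_mem, ?_⟩⟩
      have h0 : (⟨(0 : T), C.domain.zero_mem⟩ : C.domain) = 0 := rfl
      rw [h0]
      simp [hε]
    | add a b ha hb iha ihb =>
      obtain ⟨hamem, Fa⟩ := iha
      obtain ⟨hbmem, Fb⟩ := ihb
      refine ⟨C.domain.add_mem hamem hbmem, fun ε hε => ?_⟩
      obtain ⟨wa, hwaD2, hwa⟩ := Fa (ε / 2) (by positivity)
      obtain ⟨wb, hwbD2, hwb⟩ := Fb (ε / 2) (by positivity)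
      refine ⟨wa + wb, (Submodule.span ℂ S2).add_mem hwaD2 hwbD2, ?_⟩
      have hsplit : (⟨a + b, C.domain.add_mem hamem hbmem⟩ : C.domain)
          = ⟨a, hamem⟩ + ⟨b, hbmem⟩ := rfl
      rw [hsplit, C.map_add, C.map_add]
      have e1 : ‖a + b - ((wa : T) + (wb : T))‖ ≤ ‖a - wa‖ + ‖b - wb‖ := by
        have : a + b - ((wa : T) + (wb : T)) = (a - wa) + (b - wb) := by abel
        rw [this]; exact norm_add_le _ _
      have e2 : ‖C ⟨a, hamem⟩ + C ⟨b, hbmem⟩ - (C wa + C wb)‖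
          ≤ ‖C ⟨a, hamem⟩ - C wa‖ + ‖C ⟨b, hbmem⟩ - C wb‖ := by
        have : C ⟨a, hamem⟩ + C ⟨b, hbmem⟩ - (C wa + C wb)
            = (C ⟨a, hamem⟩ - C wa) + (C ⟨b, hbmem⟩ - C wb) := by abel
        rw [this]; exact norm_add_le _ _
      have : ((wa + wb : C.domain) : T) = (wa : T) + (wb : T) := rfl
      rw [this]
      linarith
    | smul c a ha iha =>
      obtain ⟨hamem, Fa⟩ := iha
      refine ⟨C.domain.smul_mem c hamem, fun ε hε => ?_⟩
      obtain ⟨wa, hwaD2, hwa⟩ := Fa (ε / (‖c‖ + 1)) (by positivity)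
      refine ⟨c • wa, (Submodule.span ℂ S2).smul_mem c hwaD2, ?_⟩
      have hsplit : (⟨c • a, C.domain.smul_mem c hamem⟩ : C.domain)
          = c • (⟨a, hamem⟩ : C.domain) := rfl
      rw [hsplit, C.map_smul, C.map_smul]
      have h1 : ((c • wa : C.domain) : T) = c • (wa : T) := rfl
      rw [h1]
      have e1 : c • a - c • (wa : T) = c • (a - (wa : T)) := (smul_sub c _ _).symm
      have e2 : c • C ⟨a, hamem⟩ - c • C wa = c • (C ⟨a, hamem⟩ - C wa) :=
        (smul_sub c _ _).symm
      rw [e1, e2, norm_smul, norm_smul]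
      have hs : ‖a - (wa : T)‖ + ‖C ⟨a, hamem⟩ - C wa‖ < ε / (‖c‖ + 1) := hwa
      have hc1 : (0 : ℝ) < ‖c‖ + 1 := by positivity
      calc ‖c‖ * ‖a - (wa : T)‖ + ‖c‖ * ‖C ⟨a, hamem⟩ - C wa‖
          = ‖c‖ * (‖a - (wa : T)‖ + ‖C ⟨a, hamem⟩ - C wa‖) := by ring
        _ ≤ ‖c‖ * (ε / (‖c‖ + 1)) :=
            mul_le_mul_of_nonneg_left (le_of_lt hs) (norm_nonneg c)
        _ < (‖c‖ + 1) * (ε / (‖c‖ + 1)) := by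
            have : (0 : ℝ) < ε / (‖c‖ + 1) := by positivity
            nlinarith
        _ = ε := by field_simp
  constructor
  · exact fun x hx => hD2dom hx
  · intro x ε hε
    obtain ⟨y, hyD1, hy⟩ := hclosure.2 x (ε / 2) (by positivity)
    obtain ⟨hv, F⟩ := main (y : T) hyD1
    obtain ⟨w, hwD2, hw⟩ := F (ε / 2) (by positivity)
    refine ⟨w, hwD2, ?_⟩
    have hyy : (⟨(y : T), hv⟩ : C.domain) = y := rfl
    rw [hyy] at hw
    have e1 : ‖(x : T) - (w : T)‖ ≤ ‖(x : T) - (y : T)‖ + ‖(y : T) - (w : T)‖ := by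
      have : (x : T) - (w : T) = ((x : T) - (y : T)) + ((y : T) - (w : T)) := by abel
      rw [this]; exact norm_add_le _ _
    have e2 : ‖C x - C w‖ ≤ ‖C x - C y‖ + ‖C y - C w‖ := by
      have : C x - C w = (C x - C y) + (C y - C w) := by abel
      rw [this]; exact norm_add_le _ _
    linarith

end
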